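/- Let E be a normed space and suppose (f_n) is a bounded sequence in E' with no pointwise convergent subsequence (on E). Then there exist an infinite subset A ⊆ ℕ and M > 0 such that the subsequence (f_n)_{n∈A} satisfies M ∑_n |λ_n| ≤ ‖∑_n λ_n f_n‖ for every (λ_n) ∈ ℓ¹(ℕ) supported on A, i.e., (f_n)_{n∈A} is equivalent to the canonical basis of ℓ¹(ℕ). -/

import Mathlib

open Filter

namespace RosenthalNW

/-- `Accepts P s X`: every strictly monotone sequence through `X`, appended to `s`,
has a finite prefix satisfying `P`. -/
def Accepts (P : List ℕ → Prop) (s : List ℕ) (X : Set ℕ) : Prop :=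
  ∀ g : ℕ → ℕ, StrictMono g → (∀ n, g n ∈ X) → ∃ k, P (s ++ (List.range k).map g)

def Rejects (P : List ℕ → Prop) (s : List ℕ) (X : Set ℕ) : Prop :=
  ∀ Y : Set ℕ, Y ⊆ X → Y.Infinite → ¬ Accepts P s Y

lemma Accepts.mono {P s} {X X' : Set ℕ} (h : Accepts P s X) (hsub : X' ⊆ X) :
    Accepts P s X' := fun g hg hmem => h g hg (fun n => hsub (hmem n))

lemma Rejects.mono {P s} {X X' : Set ℕ} (h : Rejects P s X) (hsub : X' ⊆ X) :
    Rejects P s X' := fun Y hY hYinf => h Y (hY.trans hsub) hYinf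

lemma accepts_of_P {P : List ℕ → Prop} {s : List ℕ} (hP : P s) (X : Set ℕ) :
    Accepts P s X := fun _g _hg _hmem => ⟨0, by simpa using hP⟩

/-- helper: the part of an infinite set of naturals above `n` is infinite -/
lemma infinite_above {Z : Set ℕ} (hZ : Z.Infinite) (n : ℕ) : {x ∈ Z | n < x}.Infinite := by
  have : {x ∈ Z | n < x} = Z \ {x | x ≤ n} := by
    ext m; simp [Set.mem_setOf_eq, Set.mem_diff, not_le]
  rw [this]
  exact hZ.diff (Set.finite_le_nat n)

/-- The key extension lemma of the combinatorial forcing argument. -/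
lemma reject_ext {P : List ℕ → Prop} {s : List ℕ} {X : Set ℕ}
    (hX : X.Infinite) (hrej : Rejects P s X) :
    ∃ Y, Y ⊆ X ∧ Y.Infinite ∧ ∀ n ∈ Y, Rejects P (s ++ [n]) Y := by
  by_contra hc
  push_neg at hc
  have hc' : ∀ Y : Set ℕ, Y ⊆ X → Y.Infinite →
      ∃ n ∈ Y, ∃ Z, Z ⊆ Y ∧ Z.Infinite ∧ Accepts P (s ++ [n]) Z := by
    intro Y hYX hYinf
    obtain ⟨n, hnY, hnot⟩ := hc Y hYX hYinf
    simp only [Rejects, not_forall, not_not] at hnot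
    obtain ⟨Z, hZY, hZinf, hacc⟩ := hnot
    exact ⟨n, hnY, Z, hZY, hZinf, hacc⟩
  -- the type of states
  let T := {q : ℕ × Set ℕ // q.2 ⊆ X ∧ q.2.Infinite ∧ Accepts P (s ++ [q.1]) q.2}
  have key : ∀ t : T, ∃ t' : T, t.1.1 < t'.1.1 ∧ t'.1.1 ∈ t.1.2 ∧ t'.1.2 ⊆ t.1.2 := by
    rintro ⟨⟨n, Z⟩, hZX, hZinf, hacc⟩
    have hYinf : {x ∈ Z | n < x}.Infinite := infinite_above hZinf n
    have hYX : {x ∈ Z | n < x} ⊆ X := fun x hx => hZX hx.1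
    obtain ⟨n', hn'Y, Z', hZ'Y, hZ'inf, hacc'⟩ := hc' _ hYX hYinf
    refine ⟨⟨⟨n', Z'⟩, ?_, hZ'inf, hacc'⟩, hn'Y.2, hn'Y.1, hZ'Y.trans (fun x hx => hx.1)⟩
    exact hZ'Y.trans hYX
  choose stepf hstep using key
  obtain ⟨n0, hn0X, Z0, hZ0X, hZ0inf, hacc0⟩ := hc' X (le_refl _) hX
  let t0 : T := ⟨⟨n0, Z0⟩, hZ0X, hZ0inf, hacc0⟩
  let seq : ℕ → T := fun k => stepf^[k] t0
  have hseq : ∀ k, seq (k + 1) = stepf (seq k) := fun k =>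
    Function.iterate_succ_apply' stepf k t0
  set nn : ℕ → ℕ := fun k => (seq k).1.1 with hnn
  set ZZ : ℕ → Set ℕ := fun k => (seq k).1.2 with hZZ
  have hlt : ∀ k, nn k < nn (k + 1) := by
    intro k; have := hstep (seq k); rw [← hseq k] at this; exact this.1
  have hmemZ : ∀ k, nn (k + 1) ∈ ZZ k := by
    intro k; have := hstep (seq k); rw [← hseq k] at this; exact this.2.1
  have hZsub : ∀ k, ZZ (k + 1) ⊆ ZZ k := by
    intro k; have := hstep (seq k); rw [← hseq k] at this; exact this.2.2
  have hZanti : ∀ {k j}, k ≤ j → ZZ j ⊆ ZZ k := by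
    intro k j hkj
    induction j with
    | zero => simp_all
    | succ j ih =>
      rcases Nat.lt_or_ge k (j + 1) with h | h
      · exact (hZsub j).trans (ih (Nat.lt_succ_iff.mp h))
      · have : k = j + 1 := le_antisymm hkj h
        subst this; exact fun _ h => h
  have hmono : StrictMono nn := strictMono_nat_of_lt_succ hlt
  have hZX : ∀ k, ZZ k ⊆ X := fun k => (seq k).2.1
  have hrange : Set.range nn ⊆ X := by
    rintro _ ⟨k, rfl⟩
    cases k with
    | zero => exact hn0X
    | succ k => exact hZX k (hmemZ k)
  -- derive a contradiction: the range of `nn` accepts `s`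
  refine hrej (Set.range nn) hrange (Set.infinite_range_of_injective hmono.injective) ?_
  intro h hg hmem
  have hex : ∀ j, ∃ i, nn i = h j := fun j => hmem j
  choose sig hsig using hex
  have hsigmono : StrictMono sig := by
    intro i j hij
    have : nn (sig i) < nn (sig j) := by rw [hsig i, hsig j]; exact hg hij
    exact hmono.lt_iff_lt.mp this
  have haccs : Accepts P (s ++ [nn (sig 0)]) (ZZ (sig 0)) := (seq (sig 0)).2.2.2
  have h'mem : ∀ j, h (j + 1) ∈ ZZ (sig 0) := by
    intro j
    have h1 : sig 0 < sig (j + 1) := hsigmono (Nat.succ_pos j)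
    obtain ⟨d, hd⟩ := Nat.exists_eq_add_of_lt h1
    have : nn (sig (j+1)) ∈ ZZ (sig 0 + d) := by rw [hd]; exact hmemZ _
    rw [hsig] at this
    exact hZanti (Nat.le_add_right _ _) this
  obtain ⟨k, hk⟩ := haccs (fun j => h (j + 1))
    (fun i j hij => hg (Nat.add_lt_add_right hij 1)) h'mem
  refine ⟨k + 1, ?_⟩
  have heq : s ++ (List.range (k+1)).map h
      = (s ++ [nn (sig 0)]) ++ (List.range k).map (fun j => h (j + 1)) := by
    rw [List.range_succ_eq_map, List.append_assoc]
    simp [List.map_map, Function.comp_def, hsig 0, Nat.succ_eq_add_one]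
  rw [heq]; exact hk


lemma multi_ext {P : List ℕ → Prop} (L : List (List ℕ)) (X : Set ℕ) (hX : X.Infinite)
    (h : ∀ s ∈ L, Rejects P s X) :
    ∃ Y, Y ⊆ X ∧ Y.Infinite ∧ ∀ s ∈ L, Rejects P s Y ∧ ∀ n ∈ Y, Rejects P (s ++ [n]) Y := by
  induction L with
  | nil => exact ⟨X, le_refl _, hX, by simp⟩
  | cons a L ih =>
    obtain ⟨Y1, hY1X, hY1inf, hY1⟩ := ih (fun s hs => h s (List.mem_cons_of_mem a hs))
    have hra : Rejects P a Y1 := (h a (List.mem_cons_self)).mono hY1X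
    obtain ⟨Y2, hY2Y1, hY2inf, hY2⟩ := reject_ext hY1inf hra
    refine ⟨Y2, hY2Y1.trans hY1X, hY2inf, ?_⟩
    intro s hs
    rcases List.mem_cons.mp hs with rfl | hs
    · exact ⟨hra.mono hY2Y1, hY2⟩
    · exact ⟨(hY1 s hs).1.mono hY2Y1,
        fun n hn => ((hY1 s hs).2 n (hY2Y1 hn)).mono hY2Y1⟩

/-- The Nash–Williams style dichotomy for "open" properties of finite subsets of `ℕ`. -/
theorem nw_dichotomy (P : List ℕ → Prop) (S : Set ℕ) (hS : S.Infinite) :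
    (∃ Y, Y ⊆ S ∧ Y.Infinite ∧ Accepts P [] Y) ∨
    (∃ M, M ⊆ S ∧ M.Infinite ∧
      ∀ l : List ℕ, l.Chain' (· < ·) → (∀ n ∈ l, n ∈ M) → ¬ P l) := by
  by_cases hacc : ∃ Y, Y ⊆ S ∧ Y.Infinite ∧ Accepts P [] Y
  · exact Or.inl hacc
  · right
    push_neg at hacc
    have hrej : Rejects P [] S := by
      intro Y hYS hYinf hYacc
      exact hacc Y hYS hYinf hYacc
    -- states : (last chosen element, current family of rejected lists, current infinite set)
    let T := {q : ℕ × List (List ℕ) × Set ℕ //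
      q.2.2 ⊆ S ∧ q.2.2.Infinite ∧ (∀ x ∈ q.2.2, q.1 < x) ∧ ∀ s ∈ q.2.1, Rejects P s q.2.2}
    have key : ∀ t : T, ∃ t' : T, t'.1.1 ∈ t.1.2.2 ∧
        t'.1.2.1 = t.1.2.1 ++ t.1.2.1.map (· ++ [t'.1.1]) ∧ t'.1.2.2 ⊆ t.1.2.2 := by
      rintro ⟨⟨m, L, X⟩, hXS, hXinf, hXgt, hLrej⟩
      obtain ⟨Y, hYX, hYinf, hY⟩ := multi_ext L X hXinf hLrej
      obtain ⟨m', hm'Y⟩ := hYinf.nonempty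
      have hinf' : {x ∈ Y | m' < x}.Infinite := infinite_above hYinf m'
      refine ⟨⟨⟨m', L ++ L.map (· ++ [m']), {x ∈ Y | m' < x}⟩, ?_, hinf', ?_, ?_⟩,
        hYX hm'Y, rfl, fun x hx => hYX hx.1⟩
      · exact (fun x hx => hXS (hYX hx.1))
      · exact fun x hx => hx.2
      · intro s hs
        rcases List.mem_append.mp hs with hs | hs
        · exact ((hY s hs).1).mono (fun x hx => hx.1)
        · obtain ⟨s', hs', rfl⟩ := List.mem_map.mp hs
          exact ((hY s' hs').2 m' hm'Y).mono (fun x hx => hx.1)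
    choose stepf hstep using key
    let t0 : T := ⟨⟨0, [[]], {x ∈ S | 0 < x}⟩, fun x hx => hx.1, infinite_above hS 0,
      fun x hx => hx.2, by
        intro s hs; simp at hs; subst hs
        exact hrej.mono (fun x hx => hx.1)⟩
    let seq : ℕ → T := fun k => stepf^[k] t0
    have hseq : ∀ k, seq (k + 1) = stepf (seq k) := fun k =>
      Function.iterate_succ_apply' stepf k t0
    set mm : ℕ → ℕ := fun k => (seq (k + 1)).1.1 with hmm
    set LL : ℕ → List (List ℕ) := fun k => (seq k).1.2.1 with hLL
    set XX : ℕ → Set ℕ := fun k => (seq k).1.2.2 with hXX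
    have hmemX : ∀ k, mm k ∈ XX k := by
      intro k; have := hstep (seq k); rw [← hseq k] at this; exact this.1
    have hLsucc : ∀ k, LL (k + 1) = LL k ++ (LL k).map (· ++ [mm k]) := by
      intro k; have := hstep (seq k); rw [← hseq k] at this; exact this.2.1
    have hXsucc : ∀ k, XX (k + 1) ⊆ XX k := by
      intro k; have := hstep (seq k); rw [← hseq k] at this; exact this.2.2
    have hXS : ∀ k, XX k ⊆ S := fun k => (seq k).2.1
    have hXinf : ∀ k, (XX k).Infinite := fun k => (seq k).2.2.1
    have hgt : ∀ k, ∀ x ∈ XX k, (seq k).1.1 < x := fun k => (seq k).2.2.2.1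
    have hLrej : ∀ k, ∀ s ∈ LL k, Rejects P s (XX k) := fun k => (seq k).2.2.2.2
    have hmlt : ∀ k, mm k < mm (k + 1) := by
      intro k
      have h1 : mm (k + 1) ∈ XX (k + 1) := hmemX (k + 1)
      have h2 := hgt (k + 1) _ h1
      exact h2
    have hmmono : StrictMono mm := strictMono_nat_of_lt_succ hmlt
    refine ⟨Set.range mm, ?_, Set.infinite_range_of_injective hmmono.injective, ?_⟩
    · rintro _ ⟨k, rfl⟩; exact hXS k (hmemX k)
    · -- membership of chains in the families LL
      have memL : ∀ j (l : List ℕ), l.Chain' (· < ·) → (∀ n ∈ l, ∃ i < j, n = mm i) →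
          l ∈ LL j := by
        intro j
        induction j with
        | zero =>
          intro l _ hl
          have : l = [] := by
            cases l with
            | nil => rfl
            | cons a l => exact absurd (hl a List.mem_cons_self) (by simp)
          subst this
          show [] ∈ LL 0
          simp [hLL, seq, t0]
        | succ j ih =>
          intro l hchain hl
          rw [hLsucc j]
          by_cases hmem : mm j ∈ l
          · rcases List.eq_nil_or_concat l with rfl | ⟨l', b, rfl⟩
            · simp at hmem
            · simp only [List.concat_eq_append] at hchain hl hmem ⊢
              have hpw : (l' ++ [b]).Pairwise (· < ·) := List.isChain_iff_pairwise.mp hchain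
              have hlt' : ∀ x ∈ l', x < b := by
                intro x hx
                exact (List.pairwise_append.mp hpw).2.2 x hx b (by simp)
              have hbm : b = mm j := by
                rcases List.mem_append.mp hmem with h | h
                · exfalso
                  obtain ⟨i, hij, hbi⟩ := hl b (by simp)
                  have h1 : mm i ≤ mm j := hmmono.le_iff_le.mpr (Nat.lt_succ_iff.mp hij)
                  have h2 : mm j < b := hlt' _ h
                  rw [hbi] at h2
                  omega
                · exact (by simpa using h : mm j = b).symm
              have hl' : ∀ n ∈ l', ∃ i < j, n = mm i := by
                intro n hn
                obtain ⟨i, hij, rfl⟩ := hl n (List.mem_append_left _ hn)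
                refine ⟨i, ?_, rfl⟩
                have : mm i < mm j := by
                  have := hlt' _ hn; rwa [hbm] at this
                have := hmmono.lt_iff_lt.mp this
                omega
              have hl'L : l' ∈ LL j := ih l' ((List.isChain_iff_pairwise).mpr
                (List.pairwise_append.mp hpw).1) hl'
              refine List.mem_append_right _ ?_
              rw [hbm]
              exact List.mem_map.mpr ⟨l', hl'L, rfl⟩
          · refine List.mem_append_left _ (ih l hchain ?_)
            intro n hn
            obtain ⟨i, hij, rfl⟩ := hl n hn
            refine ⟨i, ?_, rfl⟩
            rcases Nat.lt_succ_iff_lt_or_eq.mp hij with h | rfl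
            · exact h
            · exact absurd hn hmem
      intro l hchain hlmem hP
      -- find a bound for the indices of the entries of l
      have hbound : ∀ l' : List ℕ, (∀ n ∈ l', n ∈ Set.range mm) →
          ∃ j, ∀ n ∈ l', ∃ i < j, n = mm i := by
        intro l' hl'
        induction l' with
        | nil => exact ⟨0, by simp⟩
        | cons a l ihl =>
          obtain ⟨j, hj⟩ := ihl (fun n hn => hl' n (List.mem_cons_of_mem a hn))
          obtain ⟨ia, hia⟩ := hl' a List.mem_cons_self
          refine ⟨max (ia + 1) j, ?_⟩
          intro n hn
          rcases List.mem_cons.mp hn with rfl | hn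
          · exact ⟨ia, lt_of_lt_of_le (Nat.lt_succ_self ia) (le_max_left _ _), hia.symm⟩
          · obtain ⟨i, hij, rfl⟩ := hj n hn
            exact ⟨i, lt_of_lt_of_le hij (le_max_right _ _), rfl⟩
      obtain ⟨j, hj⟩ := hbound l hlmem
      have hlL : l ∈ LL j := memL j l hchain hj
      exact hLrej j l hlL (XX j) (le_refl _) (hXinf j) (accepts_of_P hP _)


/-- choose a strictly monotone sequence passing through a given sequence of infinite sets -/
lemma exists_strictMono_into (Sets : ℕ → Set ℕ) (h : ∀ k, (Sets k).Infinite) :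
    ∃ g : ℕ → ℕ, StrictMono g ∧ ∀ k, g k ∈ Sets k := by
  have h0 : ∃ n, n ∈ Sets 0 := (h 0).nonempty
  have hstep : ∀ k (prev : ℕ), ∃ n, n ∈ Sets (k + 1) ∧ prev < n := by
    intro k prev
    obtain ⟨b, hb, hbgt⟩ := (h (k + 1)).exists_gt prev
    exact ⟨b, hb, hbgt⟩
  let g : ℕ → ℕ := fun k => Nat.rec h0.choose (fun k prev => (hstep k prev).choose) k
  have hg0 : g 0 = h0.choose := rfl
  have hgs : ∀ k, g (k + 1) = (hstep k (g k)).choose := fun k => rfl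
  have hmem : ∀ k, g k ∈ Sets k := by
    intro k
    cases k with
    | zero => exact h0.choose_spec
    | succ k => exact (hstep k (g k)).choose_spec.1
  refine ⟨g, strictMono_nat_of_lt_succ fun k => ?_, hmem⟩
  exact (hstep k (g k)).choose_spec.2

lemma chain'_of_chain {R : ℕ → ℕ → Prop} [IsTrans ℕ R] {b : ℕ} {l : List ℕ}
    (h : List.Chain R b l) : l.Chain' R := by
  have := List.isChain_iff_pairwise.mp h
  exact List.isChain_iff_pairwise.mpr (List.pairwise_cons.mp this).2

lemma chain'_cons_chain {R : ℕ → ℕ → Prop} {a : ℕ} {l : List ℕ}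
    (h : List.Chain R a l) : List.Chain' R (a :: l) := h

section Rosenthal

variable {E : Type*} [NormedAddCommGroup E] [NormedSpace ℝ E]

variable (f : ℕ → E →L[ℝ] ℝ)

/-- The alternation property of a finite list of indices. -/
def AltOK (r s : ℝ) (l : List ℕ) : Prop :=
  ∃ x : E, ‖x‖ ≤ 1 ∧ ∀ (i : ℕ) (h : i < l.length),
    if Even i then f (l.get ⟨i, h⟩) x < r else s < f (l.get ⟨i, h⟩) x

/-- Boolean independence of the family of pairs `({f n < r}, {s < f n})`, `n ∈ M`. -/
def Indep (r s : ℝ) (M : Set ℕ) : Prop :=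
  ∀ F G : Finset ℕ, ↑F ⊆ M → ↑G ⊆ M → Disjoint F G →
    ∃ x : E, ‖x‖ ≤ 1 ∧ (∀ n ∈ F, f n x < r) ∧ (∀ n ∈ G, s < f n x)

/-- Convergence (no oscillation across `[r,s]`) of the family along `Y`. -/
def Conv (r s : ℝ) (Y : Set ℕ) : Prop :=
  ∀ x : E, ‖x‖ ≤ 1 → {n ∈ Y | f n x < r}.Finite ∨ {n ∈ Y | s < f n x}.Finite

/-- the padded list realizing prescribed parities -/
def padList (g : ℕ → ℕ) (F : Finset ℕ) : List ℕ → ℕ → List ℕ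
  | [], _ => []
  | k :: ks, pos =>
      if Even pos ↔ g (2 * k + 1) ∈ F then g (2 * k + 1) :: padList g F ks (pos + 1)
      else g (2 * k) :: g (2 * k + 1) :: padList g F ks (pos + 2)

lemma padList_mem (g : ℕ → ℕ) (F : Finset ℕ) :
    ∀ (ks : List ℕ) (pos : ℕ), ∀ n ∈ padList g F ks pos, ∃ j, n = g j := by
  intro ks
  induction ks with
  | nil => intro pos n hn; simp [padList] at hn
  | cons k ks ih =>
    intro pos n hn
    rw [padList] at hn
    split at hn
    · rcases List.mem_cons.mp hn with rfl | hn
      · exact ⟨2 * k + 1, rfl⟩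
      · exact ih _ n hn
    · rcases List.mem_cons.mp hn with rfl | hn
      · exact ⟨2 * k, rfl⟩
      · rcases List.mem_cons.mp hn with rfl | hn
        · exact ⟨2 * k + 1, rfl⟩
        · exact ih _ n hn

lemma padList_chain (g : ℕ → ℕ) (hg : StrictMono g) (F : Finset ℕ) :
    ∀ (ks : List ℕ) (pos b : ℕ), ks.Chain' (· < ·) → (∀ k ∈ ks, b < g (2 * k)) →
      List.Chain (· < ·) b (padList g F ks pos) := by
  intro ks
  induction ks with
  | nil => intro pos b _ _; simp [padList]; exact List.Chain.nil
  | cons k ks ih =>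
    intro pos b hchain hb
    have hbk : b < g (2 * k) := hb k List.mem_cons_self
    have hkk : g (2 * k) < g (2 * k + 1) := hg (Nat.lt_succ_self _)
    have hnext : ∀ k' ∈ ks, g (2 * k + 1) < g (2 * k') := by
      intro k' hk'
      have hkk' : k < k' :=
        (List.pairwise_cons.mp (List.isChain_iff_pairwise.mp hchain)).1 k' hk'
      exact hg (by omega)
    have hch' : ks.Chain' (· < ·) := hchain.tail
    rw [padList]
    split
    · exact List.Chain.cons (lt_trans hbk hkk) (ih _ _ hch' hnext)
    · exact List.Chain.cons hbk (List.Chain.cons hkk (ih _ _ hch' hnext))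

lemma padList_sem (g : ℕ → ℕ) (F : Finset ℕ) (Q : ℕ → ℕ → Prop) :
    ∀ (ks : List ℕ) (pos : ℕ),
      (∀ (i : ℕ) (h : i < (padList g F ks pos).length),
        Q (pos + i) ((padList g F ks pos).get ⟨i, h⟩)) →
      ∀ k ∈ ks, ∃ p, (Even p ↔ g (2 * k + 1) ∈ F) ∧ Q p (g (2 * k + 1)) := by
  intro ks
  induction ks with
  | nil => intro pos _ k hk; simp at hk
  | cons k ks ih =>
    intro pos hQ k' hk'
    by_cases hpar : Even pos ↔ g (2 * k + 1) ∈ F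
    · rw [padList, if_pos hpar] at hQ
      rcases List.mem_cons.mp hk' with rfl | hk'
      · exact ⟨pos, hpar, by simpa using hQ 0 (by simp)⟩
      · refine ih (pos + 1) ?_ k' hk'
        intro i h
        have := hQ (i + 1) (by simpa using Nat.add_lt_add_right h 1)
        simpa [Nat.add_assoc, Nat.add_comm 1 i] using this
    · rw [padList, if_neg hpar] at hQ
      rcases List.mem_cons.mp hk' with rfl | hk'
      · refine ⟨pos + 1, ?_, by simpa using hQ 1 (by simp)⟩
        rw [Nat.even_add_one]
        tauto
      · refine ih (pos + 2) ?_ k' hk'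
        intro i h
        have := hQ (i + 2) (by simpa using Nat.add_lt_add_right h 2)
        simpa [Nat.add_assoc, Nat.add_comm 2 i] using this

/-- The dichotomy for a single pair `r < s`, on any infinite ground set. -/
lemma stage_dichotomy (r s : ℝ) (S : Set ℕ) (hS : S.Infinite) :
    (∃ M : Set ℕ, M.Infinite ∧ Indep f r s M) ∨
    (∃ Y, Y ⊆ S ∧ Y.Infinite ∧ Conv f r s Y) := by
  rcases nw_dichotomy (fun l => ¬ AltOK f r s l) S hS with ⟨Y, hYS, hYinf, hacc⟩ |
    ⟨M0, hM0S, hM0inf, hgood⟩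
  · -- convergent side
    right
    refine ⟨Y, hYS, hYinf, ?_⟩
    intro x hx
    by_contra hboth
    push_neg at hboth
    obtain ⟨hA, hB⟩ := hboth
    obtain ⟨g, hgmono, hgmem⟩ := exists_strictMono_into
      (fun k => if Even k then {n ∈ Y | f n x < r} else {n ∈ Y | s < f n x})
      (by
        intro k
        by_cases h : Even k
        · simp only [if_pos h]; exact hA
        · simp only [if_neg h]; exact hB)
    have hgY : ∀ n, g n ∈ Y := by
      intro n
      have := hgmem n
      by_cases h : Even n <;> simp [h] at this <;> exact this.1
    obtain ⟨k, hk⟩ := hacc g hgmono hgY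
    refine hk ⟨x, hx, ?_⟩
    intro i h
    have hget : (([] ++ List.map g (List.range k)) : List ℕ).get ⟨i, h⟩ = g i := by
      simp
    rw [hget]
    have := hgmem i
    by_cases hpar : Even i <;> simp [hpar] at this ⊢ <;> exact this.2
  · -- independent side
    left
    obtain ⟨g, hgmono, hgmem⟩ := exists_strictMono_into (fun _ => M0) (fun _ => hM0inf)
    have he : StrictMono (fun k => g (2 * k + 1)) :=
      hgmono.comp (fun a b h => by omega)
    refine ⟨Set.range (fun k => g (2 * k + 1)),
      Set.infinite_range_of_injective he.injective, ?_⟩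
    intro F G hF hG hdisj
    -- index set
    set K : Finset ℕ := (F ∪ G).preimage (fun k => g (2 * k + 1))
      (Set.injOn_of_injective he.injective) with hK
    set ks : List ℕ := K.sort (· ≤ ·) with hks
    have hkschain : ks.Chain' (· < ·) :=
      List.isChain_iff_pairwise.mpr (K.sortedLT_sort.pairwise)
    set l : List ℕ := padList g F ks 0 with hl
    have hlchain : l.Chain' (· < ·) := by
      cases hksl : ks with
      | nil => simp [hl, hksl, padList]; exact List.IsChain.nil
      | cons k0 ks' =>
        rw [hl, hksl, padList]
        have hch : (k0 :: ks').Chain' (· < ·) := by rw [← hksl]; exact hkschain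
        have hnext : ∀ k' ∈ ks', g (2 * k0 + 1) < g (2 * k') := by
          intro k' hk'
          have := (List.pairwise_cons.mp (List.isChain_iff_pairwise.mp hch)).1 k' hk'
          exact hgmono (by omega)
        split
        · exact chain'_cons_chain (padList_chain g hgmono F ks' _ _ hch.tail hnext)
        · refine chain'_cons_chain ?_
          refine List.Chain.cons (show g (2 * k0) < g (2 * k0 + 1) from hgmono (by omega)) ?_
          exact padList_chain g hgmono F ks' _ _ hch.tail hnext
    have hlmem : ∀ n ∈ l, n ∈ M0 := by
      intro n hn
      obtain ⟨j, rfl⟩ := padList_mem g F ks 0 n hn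
      exact hgmem j
    have halt : AltOK f r s l := not_not.mp (hgood l hlchain hlmem)
    obtain ⟨x, hx, hxalt⟩ := halt
    have hsem := padList_sem g F (fun p n => if Even p then f n x < r else s < f n x)
      ks 0 (by intro i h; simpa using hxalt i h)
    refine ⟨x, hx, ?_, ?_⟩
    · intro n hn
      obtain ⟨k, rfl⟩ : ∃ k, g (2 * k + 1) = n := hF hn
      have hkK : k ∈ ks := by
        rw [hks, Finset.mem_sort, hK, Finset.mem_preimage]
        exact Finset.mem_union_left _ hn
      obtain ⟨p, hpF, hpQ⟩ := hsem k hkK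
      have hpe : Even p := hpF.mpr hn
      simpa [hpe] using hpQ
    · intro n hn
      obtain ⟨k, rfl⟩ : ∃ k, g (2 * k + 1) = n := hG hn
      have hkK : k ∈ ks := by
        rw [hks, Finset.mem_sort, hK, Finset.mem_preimage]
        exact Finset.mem_union_right _ hn
      obtain ⟨p, hpF, hpQ⟩ := hsem k hkK
      have hnF : g (2 * k + 1) ∉ F := fun hF' =>
        (Finset.disjoint_left.mp hdisj) hF' hn
      have hpo : ¬ Even p := fun hpe => hnF (hpF.mp hpe)
      simpa [hpo] using hpQ

/-- From Boolean independence to the `ℓ¹` lower estimate. -/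
lemma ell1_estimate {r s : ℝ} (hrs : r < s) {C : ℝ} (hC : 0 ≤ C)
    (hbdd : ∀ n, ‖f n‖ ≤ C) {M : Set ℕ} (hInd : Indep f r s M)
    (lam : ℕ → ℝ) (hsupp : ∀ n ∉ M, lam n = 0) (hsum : Summable lam) :
    (s - r) / 2 * ∑' n, |lam n| ≤ ‖∑' n, lam n • f n‖ := by
  have habs : Summable (fun n => |lam n|) := hsum.abs
  have hnormb : ∀ n, ‖lam n • f n‖ ≤ |lam n| * C := by
    intro n
    calc ‖lam n • f n‖ ≤ ‖lam n‖ * ‖f n‖ := ContinuousLinearMap.opNorm_smul_le _ _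
    _ = |lam n| * ‖f n‖ := by rw [Real.norm_eq_abs]
    _ ≤ |lam n| * C := mul_le_mul_of_nonneg_left (hbdd n) (abs_nonneg _)
  have hsumf : Summable (fun n => lam n • f n) :=
    Summable.of_norm (Summable.of_nonneg_of_le (fun n => norm_nonneg _) hnormb
      (habs.mul_right C))
  set T : E →L[ℝ] ℝ := ∑' n, lam n • f n with hT
  set Tot : ℝ := ∑' n, |lam n| with hTot
  -- main estimate for every ε > 0
  have main : ∀ ε : ℝ, 0 < ε → (s - r) * Tot ≤ 2 * ‖T‖ + ((s - r) + 2 * C) * ε := by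
    intro ε hε
    -- choose a finite set catching all but ε of the mass
    have htend : Filter.Tendsto (fun F : Finset ℕ => ∑ n ∈ F, |lam n|) atTop (nhds Tot) :=
      habs.hasSum
    have hev := (Metric.tendsto_nhds.mp htend) ε hε
    obtain ⟨F, hF⟩ := hev.exists
    have hFlt : |∑ n ∈ F, |lam n| - Tot| < ε := by
      simpa [Real.dist_eq] using hF
    have htail : ∑' (n : ((↑F : Set ℕ)ᶜ : Set ℕ)), |lam ↑n| ≤ ε := by
      have hsplit := Summable.sum_add_tsum_compl (s := F) habs
      rw [← hTot] at hsplit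
      have h1 := (abs_lt.mp hFlt).1
      linarith
    have hFsum : Tot - ε ≤ ∑ n ∈ F, |lam n| := by
      have := abs_lt.mp hFlt
      linarith [this.1]
    -- the two sign sets
    set Fp : Finset ℕ := F.filter (fun n => 0 < lam n) with hFp
    set Fm : Finset ℕ := F.filter (fun n => lam n < 0) with hFm
    have hsub : ∀ (G : Finset ℕ), (∀ n ∈ G, lam n ≠ 0) → ↑G ⊆ M := by
      intro G hG n hn
      by_contra hnM
      exact hG n hn (hsupp n hnM)
    have hFpM : ↑Fp ⊆ M := hsub Fp (fun n hn => ne_of_gt (Finset.mem_filter.mp hn).2)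
    have hFmM : ↑Fm ⊆ M := hsub Fm (fun n hn => ne_of_lt (Finset.mem_filter.mp hn).2)
    have hdisj : Disjoint Fp Fm := by
      rw [Finset.disjoint_left]
      intro n hnp hnm
      have h1 := (Finset.mem_filter.mp hnp).2
      have h2 := (Finset.mem_filter.mp hnm).2
      linarith
    obtain ⟨x, hx, hxF, hxG⟩ := hInd Fm Fp hFmM hFpM hdisj.symm
    obtain ⟨y, hy, hyF, hyG⟩ := hInd Fp Fm hFpM hFmM hdisj
    -- evaluation of T
    have hevalx : HasSum (fun n => lam n * f n x) (T x) := by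
      have := (ContinuousLinearMap.apply ℝ ℝ x).hasSum hsumf.hasSum
      simpa [ContinuousLinearMap.apply, smul_eq_mul] using this
    have hevaly : HasSum (fun n => lam n * f n y) (T y) := by
      have := (ContinuousLinearMap.apply ℝ ℝ y).hasSum hsumf.hasSum
      simpa [ContinuousLinearMap.apply, smul_eq_mul] using this
    have hdiff : HasSum (fun n => lam n * (f n x - f n y)) (T x - T y) := by
      have := hevalx.sub hevaly
      simpa [mul_sub] using this
    have hdsummable : Summable (fun n => lam n * (f n x - f n y)) := hdiff.summable
    -- bound on each f n at x, y
    have hfb : ∀ (n : ℕ) (z : E), ‖z‖ ≤ 1 → |f n z| ≤ C := by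
      intro n z hz
      calc |f n z| ≤ ‖f n‖ * ‖z‖ := (f n).le_opNorm z
      _ ≤ C * 1 := by
          apply mul_le_mul (hbdd n) hz (norm_nonneg _) hC
      _ = C := mul_one C
    -- split the sum
    have hsplit : T x - T y = ∑ n ∈ F, lam n * (f n x - f n y)
        + ∑' (n : ((↑F : Set ℕ)ᶜ : Set ℕ)), lam ↑n * (f ↑n x - f ↑n y) := by
      rw [← hdiff.tsum_eq]
      exact (Summable.sum_add_tsum_compl hdsummable).symm
    -- lower bound on the finite part
    have hfin : (s - r) * ∑ n ∈ F, |lam n| ≤ ∑ n ∈ F, lam n * (f n x - f n y) := by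
      rw [Finset.mul_sum]
      refine Finset.sum_le_sum ?_
      intro n hn
      rcases lt_trichotomy (lam n) 0 with hneg | hzero | hpos
      · have hnm : n ∈ Fm := Finset.mem_filter.mpr ⟨hn, hneg⟩
        have h1 : f n x < r := hxF n hnm
        have h2 : s < f n y := hyG n hnm
        have habs' : |lam n| = -lam n := abs_of_neg hneg
        rw [habs']
        nlinarith
      · rw [hzero]; simp
      · have hnp : n ∈ Fp := Finset.mem_filter.mpr ⟨hn, hpos⟩
        have h1 : s < f n x := hxG n hnp
        have h2 : f n y < r := hyF n hnp
        have habs' : |lam n| = lam n := abs_of_pos hpos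
        rw [habs']
        nlinarith
    -- bound on the tail
    have htailb : |∑' (n : ((↑F : Set ℕ)ᶜ : Set ℕ)), lam ↑n * (f ↑n x - f ↑n y)|
        ≤ 2 * C * ε := by
      have hsn : Summable (fun n : ((↑F : Set ℕ)ᶜ : Set ℕ) => ‖lam ↑n * (f ↑n x - f ↑n y)‖) := by
        refine Summable.of_nonneg_of_le (fun n => norm_nonneg _) (fun n => ?_)
          ((habs.subtype _).mul_right (2 * C))
        rw [Real.norm_eq_abs, abs_mul]
        have h1 : |f (↑n : ℕ) x - f ↑n y| ≤ 2 * C := by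
          have := hfb ↑n x hx
          have := hfb ↑n y hy
          rw [abs_le] at *
          constructor <;> [linarith [this.1]; linarith]
        calc |lam ↑n| * |f (↑n : ℕ) x - f ↑n y| ≤ |lam ↑n| * (2 * C) :=
            mul_le_mul_of_nonneg_left h1 (abs_nonneg _)
        _ = |lam ↑n| * (2 * C) := rfl
      calc |∑' (n : ((↑F : Set ℕ)ᶜ : Set ℕ)), lam ↑n * (f ↑n x - f ↑n y)|
          ≤ ∑' (n : ((↑F : Set ℕ)ᶜ : Set ℕ)), ‖lam ↑n * (f ↑n x - f ↑n y)‖ :=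
            norm_tsum_le_tsum_norm hsn
        _ ≤ ∑' (n : ((↑F : Set ℕ)ᶜ : Set ℕ)), |lam ↑n| * (2 * C) := by
            refine Summable.tsum_le_tsum (fun n => ?_) hsn ((habs.subtype _).mul_right (2 * C))
            rw [Real.norm_eq_abs, abs_mul]
            have h1 : |f (↑n : ℕ) x - f ↑n y| ≤ 2 * C := by
              have := hfb ↑n x hx
              have := hfb ↑n y hy
              rw [abs_le] at *
              constructor <;> [linarith [this.1]; linarith]
            exact mul_le_mul_of_nonneg_left h1 (abs_nonneg _)
        _ = (∑' (n : ((↑F : Set ℕ)ᶜ : Set ℕ)), |lam ↑n|) * (2 * C) := tsum_mul_right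
        _ ≤ ε * (2 * C) := by
            apply mul_le_mul_of_nonneg_right htail
            positivity
        _ = 2 * C * ε := by ring
    -- upper bound T x - T y ≤ 2 ‖T‖
    have hup : T x - T y ≤ 2 * ‖T‖ := by
      have h1 : |T x| ≤ ‖T‖ := by
        calc |T x| ≤ ‖T‖ * ‖x‖ := T.le_opNorm x
        _ ≤ ‖T‖ * 1 := mul_le_mul_of_nonneg_left hx (norm_nonneg _)
        _ = ‖T‖ := mul_one _
      have h2 : |T y| ≤ ‖T‖ := by
        calc |T y| ≤ ‖T‖ * ‖y‖ := T.le_opNorm y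
        _ ≤ ‖T‖ * 1 := mul_le_mul_of_nonneg_left hy (norm_nonneg _)
        _ = ‖T‖ := mul_one _
      rw [abs_le] at h1 h2
      linarith [h1.2, h2.1]
    have habs2 := abs_le.mp htailb
    have hstep1 : (s - r) * (Tot - ε) ≤ (s - r) * ∑ n ∈ F, |lam n| :=
      mul_le_mul_of_nonneg_left hFsum (by linarith)
    have e1 : (s - r) * Tot = (s - r) * (Tot - ε) + (s - r) * ε := by ring
    have e2 : ((s - r) + 2 * C) * ε = (s - r) * ε + 2 * C * ε := by ring
    linarith [e1, e2, hstep1, hfin, habs2.1, hsplit, hup]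
  -- conclude
  have hfinal : (s - r) * Tot ≤ 2 * ‖T‖ := by
    refine le_of_forall_pos_le_add ?_
    intro δ hδ
    have hd : 0 < (s - r) + 2 * C + 1 := by linarith
    have := main (δ / ((s - r) + 2 * C + 1)) (by positivity)
    have h2 : ((s - r) + 2 * C) * (δ / ((s - r) + 2 * C + 1)) ≤ δ := by
      have ht : 0 ≤ δ / ((s - r) + 2 * C + 1) := by positivity
      have h4 : ((s - r) + 2 * C) * (δ / ((s - r) + 2 * C + 1))
          ≤ ((s - r) + 2 * C + 1) * (δ / ((s - r) + 2 * C + 1)) :=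
        mul_le_mul_of_nonneg_right (by linarith) ht
      have h5 : ((s - r) + 2 * C + 1) * (δ / ((s - r) + 2 * C + 1)) = δ :=
        mul_div_cancel₀ δ (ne_of_gt hd)
      linarith
    linarith
  linarith

/-- A bounded real sequence that does not oscillate across any rational interval converges. -/
lemma tendsto_of_no_osc (a : ℕ → ℝ) (C : ℝ) (hb : ∀ k, |a k| ≤ C)
    (h : ∀ r s : ℚ, (r : ℝ) < (s : ℝ) →
      ¬({k | a k < (r : ℝ)}.Infinite ∧ {k | (s : ℝ) < a k}.Infinite)) :
    ∃ l, Tendsto a atTop (nhds l) := by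
  have hbdd_le : IsBoundedUnder (· ≤ ·) atTop a :=
    ⟨C, Filter.eventually_map.mpr (Filter.Eventually.of_forall fun k => (abs_le.mp (hb k)).2)⟩
  have hbdd_ge : IsBoundedUnder (· ≥ ·) atTop a :=
    ⟨-C, Filter.eventually_map.mpr (Filter.Eventually.of_forall fun k => (abs_le.mp (hb k)).1)⟩
  have heq : liminf a atTop = limsup a atTop := by
    rcases lt_or_eq_of_le (liminf_le_limsup hbdd_le hbdd_ge) with hlt | heq
    · exfalso
      obtain ⟨r, hr1, hr2⟩ := exists_rat_btwn hlt
      obtain ⟨s, hs1, hs2⟩ := exists_rat_btwn hr2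
      have hco1 : IsCoboundedUnder (· ≥ ·) atTop a := hbdd_le.isCoboundedUnder_flip
      have hco2 : IsCoboundedUnder (· ≤ ·) atTop a := hbdd_ge.isCoboundedUnder_flip
      have freq1 : ∃ᶠ k in atTop, a k < (r : ℝ) :=
        frequently_lt_of_liminf_lt hco1 hr1
      have freq2 : ∃ᶠ k in atTop, (s : ℝ) < a k :=
        frequently_lt_of_lt_limsup hco2 hs2
      refine h r s (by exact_mod_cast hs1) ⟨?_, ?_⟩
      · exact Nat.frequently_atTop_iff_infinite.mp freq1
      · exact Nat.frequently_atTop_iff_infinite.mp freq2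
    · exact heq
  exact ⟨limsup a atTop, tendsto_of_liminf_eq_limsup heq rfl hbdd_le hbdd_ge⟩

end Rosenthal

end RosenthalNW

open RosenthalNW in
/-- Rosenthal's `ℓ¹`-theorem in the dual: a bounded sequence in `E'` with no pointwise
convergent subsequence has a subsequence equivalent to the canonical basis of `ℓ¹(ℕ)`. -/
theorem rosenthal_dual {E : Type*} [NormedAddCommGroup E] [NormedSpace ℝ E]
    (f : ℕ → E →L[ℝ] ℝ) (C : ℝ) (hbdd : ∀ n, ‖f n‖ ≤ C)
    (hnoconv : ¬ ∃ k : ℕ → ℕ, StrictMono k ∧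
      ∀ x : E, ∃ l : ℝ, Tendsto (fun n => f (k n) x) atTop (nhds l)) :
    ∃ A : Set ℕ, A.Infinite ∧ ∃ M : ℝ, 0 < M ∧
      ∀ lam : ℕ → ℝ, (∀ n ∉ A, lam n = 0) → Summable lam →
        M * ∑' n, |lam n| ≤ ‖∑' n, lam n • f n‖ := by
  classical
  have hC : 0 ≤ C := le_trans (norm_nonneg (f 0)) (hbdd 0)
  by_cases hI : ∃ r s : ℝ, r < s ∧ ∃ M : Set ℕ, M.Infinite ∧ Indep f r s M
  · obtain ⟨r, s, hrs, M, hMinf, hind⟩ := hI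
    refine ⟨M, hMinf, (s - r) / 2, by linarith, ?_⟩
    intro lam h1 h2
    exact ell1_estimate f hrs hC hbdd hind lam h1 h2
  · exfalso
    apply hnoconv
    push_neg at hI
    have hstage : ∀ (S : Set ℕ), S.Infinite → ∀ r s : ℝ, r < s →
        ∃ Y, Y ⊆ S ∧ Y.Infinite ∧ Conv f r s Y := by
      intro S hS r s hrs
      rcases stage_dichotomy f r s S hS with ⟨M, hMinf, hind⟩ | h
      · exact absurd hind (hI r s hrs M hMinf)
      · exact h
    -- enumerate all rational pairs
    set q : ℕ → ℚ × ℚ := fun n => (Denumerable.eqv (ℚ × ℚ)).symm n with hq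
    have hqsurj : Function.Surjective q := (Denumerable.eqv (ℚ × ℚ)).symm.surjective
    -- decreasing sequence of infinite sets handling the pairs in turn
    have key : ∀ (k : ℕ) (t : {Z : Set ℕ // Z.Infinite}), ∃ t' : {Z : Set ℕ // Z.Infinite},
        t'.1 ⊆ t.1 ∧ (((q k).1 : ℝ) < ((q k).2 : ℝ) →
          Conv f ((q k).1 : ℝ) ((q k).2 : ℝ) t'.1) := by
      intro k t
      by_cases hlt : ((q k).1 : ℝ) < ((q k).2 : ℝ)
      · obtain ⟨Y, hYZ, hYinf, hconv⟩ := hstage t.1 t.2 _ _ hlt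
        exact ⟨⟨Y, hYinf⟩, hYZ, fun _ => hconv⟩
      · exact ⟨t, le_refl _, fun h => absurd h hlt⟩
    choose stepf hstep using key
    let ZZ : ℕ → {Z : Set ℕ // Z.Infinite} := fun k =>
      Nat.rec ⟨Set.univ, Set.infinite_univ⟩ (fun k t => stepf k t) k
    have hZZs : ∀ k, ZZ (k + 1) = stepf k (ZZ k) := fun k => rfl
    have hZsub : ∀ k, (ZZ (k + 1)).1 ⊆ (ZZ k).1 := fun k => (hstep k (ZZ k)).1
    have hZconv : ∀ k, ((q k).1 : ℝ) < ((q k).2 : ℝ) →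
        Conv f ((q k).1 : ℝ) ((q k).2 : ℝ) (ZZ (k + 1)).1 := fun k => (hstep k (ZZ k)).2
    have hZanti : ∀ {k j}, k ≤ j → (ZZ j).1 ⊆ (ZZ k).1 := by
      intro k j hkj
      induction j with
      | zero => simp_all
      | succ j ih =>
        rcases Nat.lt_or_ge k (j + 1) with h | h
        · exact (hZsub j).trans (ih (Nat.lt_succ_iff.mp h))
        · have : k = j + 1 := le_antisymm hkj h
          subst this; exact fun _ h => h
    -- a diagonal sequence
    obtain ⟨m, hmmono, hmmem⟩ := exists_strictMono_into (fun k => (ZZ (k + 1)).1)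
      (fun k => (ZZ (k + 1)).2)
    refine ⟨m, hmmono, ?_⟩
    -- pointwise convergence for unit vectors
    have hunit : ∀ u : E, ‖u‖ ≤ 1 → ∃ l, Tendsto (fun k => f (m k) u) atTop (nhds l) := by
      intro u hu
      refine tendsto_of_no_osc _ C (fun k => ?_) ?_
      · calc |f (m k) u| ≤ ‖f (m k)‖ * ‖u‖ := (f (m k)).le_opNorm u
        _ ≤ C * 1 := mul_le_mul (hbdd _) hu (norm_nonneg _) hC
        _ = C := mul_one _
      · intro r s hrs
        rintro ⟨hA, hB⟩
        obtain ⟨t, ht⟩ := hqsurj (r, s)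
        have hq1 : ((q t).1 : ℝ) = (r : ℝ) := by rw [ht]
        have hq2 : ((q t).2 : ℝ) = (s : ℝ) := by rw [ht]
        have hconv := hZconv t (by rw [hq1, hq2]; exact hrs)
        rw [hq1, hq2] at hconv
        have hmem' : ∀ k, t ≤ k → m k ∈ (ZZ (t + 1)).1 := by
          intro k hk
          exact hZanti (Nat.add_le_add_right hk 1) (hmmem k)
        rcases hconv u hu with hfin | hfin
        · have hinf : ({k | f (m k) u < (r : ℝ)} \ {k | k < t}).Infinite :=
            hA.diff (Set.finite_lt_nat t)
          have himg : (m '' ({k | f (m k) u < (r : ℝ)} \ {k | k < t})) ⊆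
              {n ∈ (ZZ (t + 1)).1 | f n u < (r : ℝ)} := by
            rintro _ ⟨k, ⟨hk1, hk2⟩, rfl⟩
            exact ⟨hmem' k (not_lt.mp hk2), hk1⟩
          exact absurd (hfin.subset himg)
            (hinf.image (Set.injOn_of_injective hmmono.injective))
        · have hinf : ({k | (s : ℝ) < f (m k) u} \ {k | k < t}).Infinite :=
            hB.diff (Set.finite_lt_nat t)
          have himg : (m '' ({k | (s : ℝ) < f (m k) u} \ {k | k < t})) ⊆
              {n ∈ (ZZ (t + 1)).1 | (s : ℝ) < f n u} := by
            rintro _ ⟨k, ⟨hk1, hk2⟩, rfl⟩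
            exact ⟨hmem' k (not_lt.mp hk2), hk1⟩
          exact absurd (hfin.subset himg)
            (hinf.image (Set.injOn_of_injective hmmono.injective))
    -- general vectors by scaling
    intro x
    by_cases hx : x = 0
    · subst hx
      exact ⟨0, by simp [map_zero]⟩
    · have hc : (0 : ℝ) < ‖x‖ := norm_pos_iff.mpr hx
      set u : E := ‖x‖⁻¹ • x with hu
      have hu1 : ‖u‖ ≤ 1 := by
        rw [hu, norm_smul, norm_inv, norm_norm, inv_mul_cancel₀ (ne_of_gt hc)]
      obtain ⟨l, hl⟩ := hunit u hu1
      refine ⟨‖x‖ * l, ?_⟩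
      have hxu : x = ‖x‖ • u := by
        rw [hu, smul_inv_smul₀ (ne_of_gt hc)]
      have heq : (fun k => f (m k) x) = fun k => ‖x‖ * f (m k) u := by
        funext k
        conv_lhs => rw [hxu]
        rw [map_smul, smul_eq_mul]
      rw [heq]
      exact hl.const_mul ‖x‖
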